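/- Let a ≥ 1, let λ > 1 be a real number, let S ⊂ ℝ be finite, let D_x ∈ Mat_a(ℂ) for x ∈ S, let B(k) = ∑_{x∈S} e^{2πikx} D_x, and set B^{(n)}(k) = B(k)·B(λk)···B(λ^{n−1}k). Assume that det B(k₀) ≠ 0 for some k₀ ∈ ℝ, and that there exists ε > 0 such that for Lebesgue-almost every k ∈ ℝ one has limsup_{n→∞} (1/n) log‖B^{(n)}(k)‖ ≤ (1/2) log λ − ε. Let H : ℝ → Mat_a(ℂ) be a measurable matrix-valued function such that for almost every k ∈ ℝ the matrix H(k) is Hermitian and positive semidefinite and satisfies H(k) = λ^{−1} B(k) H(λk) B(k)*, and such that k ↦ trace H(k) is locally Lebesgue integrable with ∫_{−T}^{T} trace H(k) dk ≤ C·T for some constant C and all T ≥ 1. Then H(k) = 0 for almost every k ∈ ℝ. -/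

import Mathlib

open MeasureTheory
open scoped ComplexOrder

attribute [local instance] Matrix.normedAddCommGroup

namespace Aux5
open Matrix

lemma star_mul_self_re (z : ℂ) : (star z * z).re = ‖z‖ ^ 2 := by
  rw [Complex.star_def, ← Complex.normSq_eq_conj_mul_self]
  rw [Complex.normSq_eq_norm_sq, Complex.ofReal_re]

variable {a : ℕ}

lemma trace_conj_re (Y : Matrix (Fin a) (Fin a) ℂ) :
    ((Yᴴ * Y).trace).re = ∑ j, ∑ i, ‖Y i j‖ ^ 2 := by
  rw [Matrix.trace]
  simp only [Matrix.diag, Matrix.mul_apply, Matrix.conjTranspose_apply]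
  rw [Complex.re_sum]
  refine Finset.sum_congr rfl fun j _ => ?_
  rw [Complex.re_sum]
  exact Finset.sum_congr rfl fun i _ => star_mul_self_re _

lemma norm_matrix_mul_le (X Y : Matrix (Fin a) (Fin a) ℂ) :
    ‖X * Y‖ ≤ (a : ℝ) * ‖X‖ * ‖Y‖ := by
  have h0 : (0:ℝ) ≤ (a : ℝ) * ‖X‖ * ‖Y‖ := by positivity
  rw [Matrix.norm_le_iff h0]
  intro i j
  rw [Matrix.mul_apply]
  calc ‖∑ l, X i l * Y l j‖ ≤ ∑ l, ‖X i l * Y l j‖ := norm_sum_le _ _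
    _ ≤ ∑ _l : Fin a, ‖X‖ * ‖Y‖ := by
        refine Finset.sum_le_sum fun l _ => ?_
        rw [norm_mul]
        exact mul_le_mul (Matrix.norm_entry_le_entrywise_sup_norm X)
          (Matrix.norm_entry_le_entrywise_sup_norm Y) (norm_nonneg _) (norm_nonneg _)
    _ = (a : ℝ) * ‖X‖ * ‖Y‖ := by
        rw [Finset.sum_const, Finset.card_univ, Fintype.card_fin, nsmul_eq_mul]; ring

lemma trace_key_bound {M : Matrix (Fin a) (Fin a) ℂ} (hM : M.PosSemidef)
    (A : Matrix (Fin a) (Fin a) ℂ) :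
    ((A * M * Aᴴ).trace).re ≤ (a:ℝ)^2 * ‖A‖^2 * (M.trace).re := by
  obtain ⟨X, rfl⟩ : ∃ X : Matrix (Fin a) (Fin a) ℂ, M = Xᴴ * X := by
    open scoped MatrixOrder in
    obtain ⟨X, hX⟩ := CStarAlgebra.nonneg_iff_eq_star_mul_self.mp hM.nonneg
    exact ⟨X, hX⟩
  have hid : A * (Xᴴ * X) * Aᴴ = (X * Aᴴ)ᴴ * (X * Aᴴ) := by
    simp [Matrix.conjTranspose_mul, Matrix.mul_assoc]
  rw [hid, trace_conj_re, trace_conj_re]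
  have key : ∀ i j, ‖(X * Aᴴ) i j‖ ^ 2 ≤ ‖A‖^2 * ((a:ℝ) * ∑ l, ‖X i l‖^2) := by
    intro i j
    have h1 : ‖(X * Aᴴ) i j‖ ≤ ‖A‖ * ∑ l, ‖X i l‖ := by
      rw [Matrix.mul_apply]
      calc ‖∑ l, X i l * Aᴴ l j‖ ≤ ∑ l, ‖X i l * Aᴴ l j‖ := norm_sum_le _ _
        _ ≤ ∑ l, ‖X i l‖ * ‖A‖ := by
            refine Finset.sum_le_sum fun l _ => ?_
            rw [norm_mul, Matrix.conjTranspose_apply]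
            refine mul_le_mul_of_nonneg_left ?_ (norm_nonneg _)
            rw [norm_star]; exact Matrix.norm_entry_le_entrywise_sup_norm A
        _ = ‖A‖ * ∑ l, ‖X i l‖ := by rw [← Finset.sum_mul, mul_comm]
    have hcs : (∑ l, ‖X i l‖) ^ 2 ≤ (a:ℝ) * ∑ l, ‖X i l‖^2 := by
      have := sq_sum_le_card_mul_sum_sq (s := (Finset.univ : Finset (Fin a)))
        (f := fun l => ‖X i l‖)
      simpa using this
    calc ‖(X * Aᴴ) i j‖ ^ 2 ≤ (‖A‖ * ∑ l, ‖X i l‖)^2 := by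
          have h2 := norm_nonneg ((X * Aᴴ) i j)
          nlinarith
      _ = ‖A‖^2 * (∑ l, ‖X i l‖)^2 := by ring
      _ ≤ ‖A‖^2 * ((a:ℝ) * ∑ l, ‖X i l‖^2) := by
          exact mul_le_mul_of_nonneg_left hcs (sq_nonneg _)
  calc (∑ j, ∑ i, ‖(X * Aᴴ) i j‖ ^ 2)
      ≤ ∑ _j : Fin a, ∑ i, ‖A‖^2 * ((a:ℝ) * ∑ l, ‖X i l‖^2) := by
        refine Finset.sum_le_sum fun j _ => Finset.sum_le_sum fun i _ => key i j
    _ = (a:ℝ)^2 * ‖A‖^2 * ∑ j, ∑ i, ‖X i j‖^2 := by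
        rw [Finset.sum_const, Finset.card_univ, Fintype.card_fin, nsmul_eq_mul]
        have hsw : ∑ j : Fin a, ∑ i : Fin a, ‖X i j‖^2
            = ∑ i : Fin a, ∑ l : Fin a, ‖X i l‖^2 := Finset.sum_comm
        rw [hsw, Finset.mul_sum, Finset.mul_sum]
        exact Finset.sum_congr rfl fun i _ => by ring

lemma eq_zero_of_trace_re_eq_zero {M : Matrix (Fin a) (Fin a) ℂ} (hM : M.PosSemidef)
    (h : (M.trace).re = 0) : M = 0 := by
  obtain ⟨X, rfl⟩ : ∃ X : Matrix (Fin a) (Fin a) ℂ, M = Xᴴ * X := by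
    open scoped MatrixOrder in
    obtain ⟨X, hX⟩ := CStarAlgebra.nonneg_iff_eq_star_mul_self.mp hM.nonneg
    exact ⟨X, hX⟩
  rw [trace_conj_re] at h
  have hX : X = 0 := by
    ext i j
    have hz1 : ∑ i', ‖X i' j‖ ^ 2 = 0 :=
      (Finset.sum_eq_zero_iff_of_nonneg (fun j' _ =>
        Finset.sum_nonneg fun i' _ => sq_nonneg _)).mp h j (Finset.mem_univ _)
    have hz2 : ‖X i j‖ ^ 2 = 0 :=
      (Finset.sum_eq_zero_iff_of_nonneg (fun i' _ => sq_nonneg _)).mp hz1 i (Finset.mem_univ _)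
    have : ‖X i j‖ = 0 := by nlinarith [norm_nonneg (X i j)]
    simpa using this
  simp [hX]


lemma trace_re_nonneg {M : Matrix (Fin a) (Fin a) ℂ} (hM : M.PosSemidef) :
    0 ≤ (M.trace).re := by
  obtain ⟨X, rfl⟩ : ∃ X : Matrix (Fin a) (Fin a) ℂ, M = Xᴴ * X := by
    open scoped MatrixOrder in
    obtain ⟨X, hX⟩ := CStarAlgebra.nonneg_iff_eq_star_mul_self.mp hM.nonneg
    exact ⟨X, hX⟩
  rw [trace_conj_re]
  exact Finset.sum_nonneg fun j _ => Finset.sum_nonneg fun i _ => sq_nonneg _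

lemma ae_comp_mul_left {c : ℝ} (hc : c ≠ 0) {P : ℝ → Prop}
    (h : ∀ᵐ k : ℝ ∂volume, P k) : ∀ᵐ k : ℝ ∂volume, P (c * k) := by
  rw [ae_iff] at h ⊢
  have hs : {k : ℝ | ¬ P (c * k)} = (c * ·) ⁻¹' {k | ¬ P k} := rfl
  rw [hs, Real.volume_preimage_mul_left hc, h, mul_zero]

lemma lintegral_scale (φ : ℝ → ℝ) (hφ : Measurable φ) {c : ℝ} (hc : 0 < c)
    (T : ℝ) (hT : 0 ≤ T) :
    ∫⁻ k in Set.Icc (-T) T, ENNReal.ofReal (φ (c * k)) ∂volume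
      = ENNReal.ofReal c⁻¹ * ∫⁻ k in Set.Icc (-(c*T)) (c*T), ENNReal.ofReal (φ k) ∂volume := by
  have hpre : (c * ·) ⁻¹' (Set.Icc (-(c*T)) (c*T)) = Set.Icc (-T) T := by
    ext x
    simp only [Set.mem_preimage, Set.mem_Icc]
    rw [show -(c*T) = c * (-T) by ring]
    rw [mul_le_mul_iff_right₀ hc, mul_le_mul_iff_right₀ hc]
  have hmap : Measure.map (c * ·) (volume.restrict (Set.Icc (-T) T))
      = ENNReal.ofReal c⁻¹ • volume.restrict (Set.Icc (-(c*T)) (c*T)) := by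
    rw [← hpre, ← Measure.restrict_map (measurable_const_mul c) measurableSet_Icc,
      Real.map_volume_mul_left hc.ne', Measure.restrict_smul,
      abs_of_pos (inv_pos.mpr hc)]
  have hlift : ∫⁻ k in Set.Icc (-T) T, ENNReal.ofReal (φ (c * k)) ∂volume
      = ∫⁻ y, ENNReal.ofReal (φ y) ∂(Measure.map (c * ·) (volume.restrict (Set.Icc (-T) T))) :=
    (lintegral_map (ENNReal.measurable_ofReal.comp hφ) (measurable_const_mul c)).symm
  rw [hlift, hmap, lintegral_smul_measure, smul_eq_mul]

end Aux5


/-- **Theorem 3.24 (analytic core).** Suppose the Fourier matrix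
`B(k) = ∑_{x ∈ S} e^{2πikx} D_x` has `det B(k₀) ≠ 0` for some `k₀`, and the
maximal Lyapunov exponent of the cocycle `B^{(n)}(k) = B(k)B(λk)⋯B(λ^{n-1}k)`
satisfies `χ^B(k) ≤ (1/2) log λ − ε` for a.e. `k`. If `H` is a measurable
family of Hermitian positive semidefinite matrices with
`H(k) = λ⁻¹ B(k) H(λk) B(k)*` a.e. and locally integrable, linearly bounded
trace, then `H(k) = 0` for almost every `k`. -/
theorem stmt_5 (a : ℕ) (ha : 1 ≤ a) (lam : ℝ) (hlam : 1 < lam)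
    (S : Finset ℝ) (D : ℝ → Matrix (Fin a) (Fin a) ℂ)
    (B : ℝ → Matrix (Fin a) (Fin a) ℂ)
    (hB : ∀ k : ℝ, B k =
      ∑ x ∈ S, Complex.exp (2 * (Real.pi : ℂ) * Complex.I * (k : ℂ) * (x : ℂ)) • D x)
    (Bn : ℕ → ℝ → Matrix (Fin a) (Fin a) ℂ)
    (hBn : ∀ n k, Bn n k = ((List.range n).map (fun i => B (lam ^ i * k))).prod)
    (k₀ : ℝ) (hdet : (B k₀).det ≠ 0)
    (ε : ℝ) (hε : 0 < ε)
    (hLyap : ∀ᵐ k : ℝ ∂volume,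
      Filter.limsup (fun n : ℕ => (1 / (n : ℝ)) * Real.log ‖Bn n k‖) Filter.atTop
        ≤ Real.log lam / 2 - ε)
    (H : ℝ → Matrix (Fin a) (Fin a) ℂ)
    (hmeas : ∀ i j, Measurable fun k => H k i j)
    (hHp : ∀ᵐ k : ℝ ∂volume, (H k).PosSemidef ∧
      H k = ((lam : ℂ))⁻¹ • (B k * H (lam * k) * (B k).conjTranspose))
    (C : ℝ)
    (hloc : ∀ T : ℝ, IntegrableOn (fun k => ((H k).trace).re) (Set.Icc (-T) T) volume)
    (hbound : ∀ T : ℝ, 1 ≤ T →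
      ∫ k in Set.Icc (-T) T, ((H k).trace).re ∂volume ≤ C * T) :
    ∀ᵐ k : ℝ ∂volume, H k = 0 := by
  classical
  have hlam0 : (0:ℝ) < lam := lt_trans one_pos hlam
  set L : ℝ := Real.log lam / 2 with hL
  -- uniform bound on ‖B k‖
  set K : ℝ := max (∑ x ∈ S, ‖D x‖) 1 with hK
  have hK1 : (1:ℝ) ≤ K := le_max_right _ _
  have hBle : ∀ k, ‖B k‖ ≤ K := by
    intro k
    rw [hB k, Matrix.norm_le_iff (le_trans zero_le_one hK1)]
    intro i j
    have happ : (∑ x ∈ S, Complex.exp (2 * (Real.pi:ℂ) * Complex.I * (k:ℂ) * (x:ℂ)) • D x) i j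
        = ∑ x ∈ S, Complex.exp (2 * (Real.pi:ℂ) * Complex.I * (k:ℂ) * (x:ℂ)) * D x i j := by
      simp [Matrix.sum_apply, Matrix.smul_apply]
    rw [happ]
    calc ‖∑ x ∈ S, Complex.exp (2 * (Real.pi:ℂ) * Complex.I * (k:ℂ) * (x:ℂ)) * D x i j‖
        ≤ ∑ x ∈ S, ‖Complex.exp (2 * (Real.pi:ℂ) * Complex.I * (k:ℂ) * (x:ℂ)) * D x i j‖ :=
          norm_sum_le _ _
      _ ≤ ∑ x ∈ S, ‖D x‖ := by
          refine Finset.sum_le_sum fun x hx => ?_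
          rw [norm_mul]
          have hexp : ‖Complex.exp (2 * (Real.pi:ℂ) * Complex.I * (k:ℂ) * (x:ℂ))‖ = 1 := by
            have harg : (2 * (Real.pi:ℂ) * Complex.I * (k:ℂ) * (x:ℂ))
                = ((2 * Real.pi * k * x : ℝ) : ℂ) * Complex.I := by push_cast; ring
            rw [harg, Complex.norm_exp_ofReal_mul_I]
          rw [hexp, one_mul]
          exact Matrix.norm_entry_le_entrywise_sup_norm _
      _ ≤ K := le_max_left _ _
  set Kb : ℝ := (a:ℝ) * K with hKb
  have ha1 : (1:ℝ) ≤ (a:ℝ) := by exact_mod_cast ha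
  have hKb1 : (1:ℝ) ≤ Kb := by nlinarith
  have hBn_succ : ∀ n k, Bn (n+1) k = Bn n k * B (lam ^ n * k) := by
    intro n k
    rw [hBn, hBn, List.range_succ, List.map_append, List.prod_append]
    simp
  have hBnle : ∀ n k, ‖Bn n k‖ ≤ Kb ^ n := by
    intro n k
    induction n with
    | zero =>
      rw [hBn]
      simp only [List.range_zero, List.map_nil, List.prod_nil, pow_zero]
      rw [Matrix.norm_le_iff zero_le_one]
      intro i j
      by_cases h : i = j <;> simp [Matrix.one_apply, h]
    | succ n ih =>
      rw [hBn_succ]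
      calc ‖Bn n k * B (lam ^ n * k)‖ ≤ (a:ℝ) * ‖Bn n k‖ * ‖B (lam ^ n * k)‖ :=
            Aux5.norm_matrix_mul_le _ _
        _ ≤ (a:ℝ) * Kb ^ n * K := by
            have h1 : (0:ℝ) ≤ (a:ℝ) := by positivity
            have h2 : (0:ℝ) ≤ (a:ℝ) * Kb ^ n := by positivity
            exact mul_le_mul (mul_le_mul_of_nonneg_left ih h1) (hBle _) (norm_nonneg _) h2
        _ = Kb ^ (n+1) := by rw [pow_succ, hKb]; ring
  have hub : ∀ k (n : ℕ), (1/(n:ℝ)) * Real.log ‖Bn n k‖ ≤ Real.log Kb := by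
    intro k n
    have hlogKb : 0 ≤ Real.log Kb := Real.log_nonneg hKb1
    rcases Nat.eq_zero_or_pos n with h0 | hn
    · subst h0; simp [hlogKb]
    rcases eq_or_lt_of_le (norm_nonneg (Bn n k)) with hz | hp
    · rw [← hz]; simp [Real.log_zero, hlogKb]
    · have hlog : Real.log ‖Bn n k‖ ≤ (n:ℝ) * Real.log Kb := by
        calc Real.log ‖Bn n k‖ ≤ Real.log (Kb ^ n) := Real.log_le_log hp (hBnle n k)
          _ = (n:ℝ) * Real.log Kb := by rw [Real.log_pow]
      have hnpos : (0:ℝ) < (n:ℝ) := by exact_mod_cast hn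
      have h1n : (0:ℝ) ≤ 1/(n:ℝ) := by positivity
      calc (1/(n:ℝ)) * Real.log ‖Bn n k‖ ≤ (1/(n:ℝ)) * ((n:ℝ) * Real.log Kb) :=
            mul_le_mul_of_nonneg_left hlog h1n
        _ = Real.log Kb := by field_simp
  -- combined a.e. event
  have hscale : ∀ n : ℕ, ∀ᵐ k : ℝ ∂volume, ((H (lam ^ n * k)).PosSemidef ∧
      H (lam ^ n * k) = ((lam : ℂ))⁻¹ •
        (B (lam ^ n * k) * H (lam * (lam ^ n * k)) * (B (lam ^ n * k)).conjTranspose)) :=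
    fun n => Aux5.ae_comp_mul_left (pow_ne_zero n hlam0.ne') hHp
  have hAE : ∀ᵐ k : ℝ ∂volume,
      (∀ n : ℕ, ((H (lam ^ n * k)).PosSemidef ∧
        H (lam ^ n * k) = ((lam : ℂ))⁻¹ •
          (B (lam ^ n * k) * H (lam * (lam ^ n * k)) * (B (lam ^ n * k)).conjTranspose)))
      ∧ Filter.limsup (fun n : ℕ => (1 / (n : ℝ)) * Real.log ‖Bn n k‖) Filter.atTop
          ≤ L - ε := (ae_all_iff.mpr hscale).and hLyap
  -- the key a.e. eventual bound
  have key : ∀ᵐ k : ℝ ∂volume, ∀ᶠ n : ℕ in Filter.atTop,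
      ((H k).trace).re ≤ ((a:ℝ)^2 * Real.exp (-(n:ℝ)*ε)) * ((H (lam ^ n * k)).trace).re := by
    filter_upwards [hAE] with k hk
    obtain ⟨hrec, hls⟩ := hk
    have hiter : ∀ n : ℕ, H k = (((lam:ℂ))^n)⁻¹ •
        (Bn n k * H (lam ^ n * k) * (Bn n k).conjTranspose) := by
      intro n
      induction n with
      | zero =>
        have h0 : Bn 0 k = 1 := by rw [hBn]; simp
        simp [h0]
      | succ n ih =>
        have harg : lam * (lam ^ n * k) = lam ^ (n+1) * k := by ring
        have hrecn := (hrec n).2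
        rw [harg] at hrecn
        rw [hBn_succ, ih, hrecn]
        rw [Matrix.conjTranspose_mul, Matrix.mul_smul, Matrix.smul_mul, smul_smul]
        congr 1
        · rw [pow_succ, mul_inv]
        · simp only [Matrix.mul_assoc]
    have htr : ∀ n : ℕ, ((H k).trace).re ≤
        (lam ^ n)⁻¹ * ((a:ℝ)^2 * ‖Bn n k‖^2 * ((H (lam ^ n * k)).trace).re) := by
      intro n
      have hpsd := (hrec n).1
      have h1 : ((H k).trace).re = (lam ^ n)⁻¹ *
          ((Bn n k * H (lam ^ n * k) * (Bn n k).conjTranspose).trace).re := by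
        conv_lhs => rw [hiter n]
        rw [Matrix.trace_smul]
        have hcast : (((lam:ℂ))^n)⁻¹ = (((lam ^ n)⁻¹ : ℝ) : ℂ) := by push_cast; ring
        rw [hcast, smul_eq_mul, Complex.re_ofReal_mul]
      rw [h1]
      have hpos : (0:ℝ) ≤ (lam ^ n)⁻¹ := by positivity
      exact mul_le_mul_of_nonneg_left (Aux5.trace_key_bound hpsd (Bn n k)) hpos
    have hbdd : Filter.IsBoundedUnder (· ≤ ·) Filter.atTop
        (fun n : ℕ => (1/(n:ℝ)) * Real.log ‖Bn n k‖) :=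
      Filter.isBoundedUnder_of ⟨Real.log Kb, hub k⟩
    have hev : ∀ᶠ n : ℕ in Filter.atTop,
        (1/(n:ℝ)) * Real.log ‖Bn n k‖ < L - ε/2 := by
      refine Filter.eventually_lt_of_limsup_lt ?_ hbdd
      calc Filter.limsup (fun n : ℕ => (1/(n:ℝ)) * Real.log ‖Bn n k‖) Filter.atTop
          ≤ L - ε := hls
        _ < L - ε/2 := by linarith
    filter_upwards [hev, Filter.eventually_ge_atTop 1] with n hn hn1
    have hnpos : (0:ℝ) < (n:ℝ) := by exact_mod_cast hn1
    have hBnexp : ‖Bn n k‖ ≤ Real.exp ((n:ℝ) * (L - ε/2)) := by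
      rcases eq_or_lt_of_le (norm_nonneg (Bn n k)) with hz | hp
      · rw [← hz]; positivity
      · have hlogid : Real.log ‖Bn n k‖ = (n:ℝ) * ((1/(n:ℝ)) * Real.log ‖Bn n k‖) := by
          field_simp
        have hlog : Real.log ‖Bn n k‖ < (n:ℝ) * (L - ε/2) := by
          rw [hlogid]
          exact (mul_lt_mul_iff_right₀ hnpos).mpr hn
        calc ‖Bn n k‖ = Real.exp (Real.log ‖Bn n k‖) := (Real.exp_log hp).symm
          _ ≤ Real.exp ((n:ℝ)*(L - ε/2)) := Real.exp_le_exp.mpr hlog.le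
    have hgn : 0 ≤ ((H (lam ^ n * k)).trace).re := Aux5.trace_re_nonneg (hrec n).1
    have hcoef : (lam ^ n)⁻¹ * ((a:ℝ)^2 * ‖Bn n k‖^2) ≤ (a:ℝ)^2 * Real.exp (-(n:ℝ)*ε) := by
      have hexp2L : Real.exp ((n:ℝ)*(L - ε/2)) ^ 2 = lam ^ n * Real.exp (-(n:ℝ)*ε) := by
        rw [sq, ← Real.exp_add]
        have harg2 : (n:ℝ)*(L - ε/2) + (n:ℝ)*(L - ε/2) = (n:ℝ) * Real.log lam + (-(n:ℝ)*ε) := by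
          rw [hL]; ring
        rw [harg2, Real.exp_add, Real.exp_nat_mul, Real.exp_log hlam0]
      have hsq : ‖Bn n k‖^2 ≤ lam ^ n * Real.exp (-(n:ℝ)*ε) := by
        rw [← hexp2L]
        have := norm_nonneg (Bn n k)
        nlinarith [Real.exp_pos ((n:ℝ)*(L - ε/2))]
      have hpinv : (0:ℝ) ≤ (lam ^ n)⁻¹ := by positivity
      calc (lam ^ n)⁻¹ * ((a:ℝ)^2 * ‖Bn n k‖^2)
          ≤ (lam ^ n)⁻¹ * ((a:ℝ)^2 * (lam ^ n * Real.exp (-(n:ℝ)*ε))) := by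
            refine mul_le_mul_of_nonneg_left (mul_le_mul_of_nonneg_left hsq (by positivity)) hpinv
        _ = (a:ℝ)^2 * Real.exp (-(n:ℝ)*ε) := by
            field_simp
    calc ((H k).trace).re ≤
        (lam ^ n)⁻¹ * ((a:ℝ)^2 * ‖Bn n k‖^2 * ((H (lam ^ n * k)).trace).re) := htr n
      _ = ((lam ^ n)⁻¹ * ((a:ℝ)^2 * ‖Bn n k‖^2)) * ((H (lam ^ n * k)).trace).re := by ring
      _ ≤ ((a:ℝ)^2 * Real.exp (-(n:ℝ)*ε)) * ((H (lam ^ n * k)).trace).re :=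
          mul_le_mul_of_nonneg_right hcoef hgn
  -- measurability and nonnegativity of the trace density
  have hφm : Measurable fun k => ((H k).trace).re := by
    have h1 : Measurable fun k => (H k).trace := by
      simp only [Matrix.trace, Matrix.diag]
      exact Finset.measurable_sum _ fun i _ => hmeas i i
    exact Complex.measurable_re.comp h1
  have hφnn : ∀ᵐ k : ℝ ∂volume, 0 ≤ ((H k).trace).re := by
    filter_upwards [hHp] with k hk using Aux5.trace_re_nonneg hk.1
  -- vanishing on each interval
  have hzero : ∀ T : ℝ, 1 ≤ T →
      ∀ᵐ k ∂(volume.restrict (Set.Icc (-T) T)), ((H k).trace).re = 0 := by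
    intro T hT
    have hgm : ∀ n : ℕ, Measurable fun k : ℝ =>
        ENNReal.ofReal ((a:ℝ)^2 * Real.exp (-(n:ℝ)*ε) * ((H (lam ^ n * k)).trace).re) :=
      fun n => ENNReal.measurable_ofReal.comp
        ((measurable_const_mul _).comp (hφm.comp (measurable_const_mul _)))
    have hIn : ∀ n : ℕ, ∫⁻ k in Set.Icc (-T) T,
        ENNReal.ofReal (((H (lam ^ n * k)).trace).re) ∂volume ≤ ENNReal.ofReal (C * T) := by
      intro n
      have hc : (0:ℝ) < lam ^ n := pow_pos hlam0 n
      rw [Aux5.lintegral_scale _ hφm hc T (by linarith)]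
      have h1 : ∫⁻ k in Set.Icc (-(lam ^ n * T)) (lam ^ n * T),
          ENNReal.ofReal (((H k).trace).re) ∂volume
          = ENNReal.ofReal (∫ k in Set.Icc (-(lam ^ n * T)) (lam ^ n * T),
              ((H k).trace).re ∂volume) :=
        (MeasureTheory.ofReal_integral_eq_lintegral_ofReal (hloc _)
          (ae_restrict_of_ae hφnn)).symm
      rw [h1]
      have hlamn1 : (1:ℝ) ≤ lam ^ n := one_le_pow₀ hlam.le
      have hT' : (1:ℝ) ≤ lam ^ n * T := by nlinarith
      calc ENNReal.ofReal (lam ^ n)⁻¹ * ENNReal.ofReal (∫ k in Set.Icc (-(lam ^ n * T))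
            (lam ^ n * T), ((H k).trace).re ∂volume)
          ≤ ENNReal.ofReal (lam ^ n)⁻¹ * ENNReal.ofReal (C * (lam ^ n * T)) := by
            exact mul_le_mul_right (ENNReal.ofReal_le_ofReal (hbound _ hT')) _
        _ = ENNReal.ofReal ((lam ^ n)⁻¹ * (C * (lam ^ n * T))) :=
            (ENNReal.ofReal_mul (by positivity)).symm
        _ = ENNReal.ofReal (C * T) := by
            congr 1
            field_simp
    have hfatou : ∫⁻ k in Set.Icc (-T) T, ENNReal.ofReal (((H k).trace).re) ∂volume = 0 := by
      have hle1 : ∀ᵐ k ∂(volume.restrict (Set.Icc (-T) T)),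
          ENNReal.ofReal (((H k).trace).re) ≤ Filter.liminf (fun n : ℕ =>
            ENNReal.ofReal ((a:ℝ)^2 * Real.exp (-(n:ℝ)*ε) * ((H (lam ^ n * k)).trace).re))
            Filter.atTop := by
        filter_upwards [ae_restrict_of_ae key] with k hk
        refine Filter.le_liminf_of_le (by isBoundedDefault) ?_
        filter_upwards [hk] with n hn
        exact ENNReal.ofReal_le_ofReal hn
      have hle2 : ∫⁻ k in Set.Icc (-T) T, ENNReal.ofReal (((H k).trace).re) ∂volume
          ≤ Filter.liminf (fun n : ℕ => ∫⁻ k in Set.Icc (-T) T,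
              ENNReal.ofReal ((a:ℝ)^2 * Real.exp (-(n:ℝ)*ε) *
                ((H (lam ^ n * k)).trace).re) ∂volume) Filter.atTop :=
        le_trans (lintegral_mono_ae hle1) (lintegral_liminf_le hgm)
      have hle3 : ∀ n : ℕ, ∫⁻ k in Set.Icc (-T) T,
          ENNReal.ofReal ((a:ℝ)^2 * Real.exp (-(n:ℝ)*ε) * ((H (lam ^ n * k)).trace).re) ∂volume
          ≤ ENNReal.ofReal ((a:ℝ)^2 * Real.exp (-(n:ℝ)*ε)) * ENNReal.ofReal (C * T) := by
        intro n
        have hsplit : ∀ k : ℝ, ENNReal.ofReal ((a:ℝ)^2 * Real.exp (-(n:ℝ)*ε) *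
            ((H (lam ^ n * k)).trace).re) = ENNReal.ofReal ((a:ℝ)^2 * Real.exp (-(n:ℝ)*ε)) *
            ENNReal.ofReal (((H (lam ^ n * k)).trace).re) := fun k =>
          ENNReal.ofReal_mul (by positivity)
        simp only [hsplit]
        have hmg : Measurable fun k : ℝ => ENNReal.ofReal (((H (lam ^ n * k)).trace).re) :=
          ENNReal.measurable_ofReal.comp (hφm.comp (measurable_const_mul _))
        rw [lintegral_const_mul _ hmg]
        exact mul_le_mul_right (hIn n) _
      have htend : Filter.Tendsto (fun n : ℕ =>
          ENNReal.ofReal ((a:ℝ)^2 * Real.exp (-(n:ℝ)*ε)) * ENNReal.ofReal (C * T))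
          Filter.atTop (nhds 0) := by
        have h1 : Filter.Tendsto (fun n : ℕ => (a:ℝ)^2 * Real.exp (-(n:ℝ)*ε) * (C * T))
            Filter.atTop (nhds 0) := by
          have h2 : Filter.Tendsto (fun n : ℕ => Real.exp (-(n:ℝ)*ε)) Filter.atTop (nhds 0) := by
            have h3 : Filter.Tendsto (fun n : ℕ => -(n:ℝ)*ε) Filter.atTop Filter.atBot := by
              apply Filter.Tendsto.atBot_mul_const hε
              exact Filter.tendsto_neg_atBot_iff.mpr tendsto_natCast_atTop_atTop
            exact Real.tendsto_exp_atBot.comp h3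
          have := (h2.const_mul ((a:ℝ)^2)).mul_const (C * T)
          simpa using this
        have h4 : Filter.Tendsto (fun n : ℕ =>
            ENNReal.ofReal ((a:ℝ)^2 * Real.exp (-(n:ℝ)*ε) * (C * T)))
            Filter.atTop (nhds 0) := by
          have := (ENNReal.continuous_ofReal.tendsto 0).comp h1
          simpa [Function.comp_def] using this
        apply h4.congr
        intro n
        rw [← ENNReal.ofReal_mul (by positivity), mul_assoc]
      have hlim0 : Filter.liminf (fun n : ℕ => ∫⁻ k in Set.Icc (-T) T,
          ENNReal.ofReal ((a:ℝ)^2 * Real.exp (-(n:ℝ)*ε) *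
            ((H (lam ^ n * k)).trace).re) ∂volume) Filter.atTop = 0 := by
        have hup : Filter.liminf (fun n : ℕ => ∫⁻ k in Set.Icc (-T) T,
            ENNReal.ofReal ((a:ℝ)^2 * Real.exp (-(n:ℝ)*ε) *
              ((H (lam ^ n * k)).trace).re) ∂volume) Filter.atTop
            ≤ Filter.liminf (fun n : ℕ =>
              ENNReal.ofReal ((a:ℝ)^2 * Real.exp (-(n:ℝ)*ε)) * ENNReal.ofReal (C * T))
              Filter.atTop :=
          Filter.liminf_le_liminf (Filter.Eventually.of_forall hle3)
        rw [htend.liminf_eq] at hup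
        exact le_antisymm hup zero_le
      rw [← le_zero_iff]
      rw [← hlim0]
      exact hle2
    have hmg0 : Measurable fun k : ℝ => ENNReal.ofReal (((H k).trace).re) :=
      ENNReal.measurable_ofReal.comp hφm
    have hae0 : ∀ᵐ k ∂(volume.restrict (Set.Icc (-T) T)),
        ENNReal.ofReal (((H k).trace).re) = 0 := by
      have h := (lintegral_eq_zero_iff hmg0).mp hfatou
      filter_upwards [h] with k hk
      simpa using hk
    filter_upwards [hae0, ae_restrict_of_ae hφnn] with k h1 h2
    have h3 : ((H k).trace).re ≤ 0 := by
      by_contra h4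
      push_neg at h4
      rw [ENNReal.ofReal_eq_zero] at h1
      linarith
    linarith
  -- globalize
  have hzero' : ∀ᵐ k : ℝ ∂volume, ((H k).trace).re = 0 := by
    have h1 : ∀ m : ℕ, ∀ᵐ k : ℝ ∂volume,
        k ∈ Set.Icc (-(1+(m:ℝ))) (1+(m:ℝ)) → ((H k).trace).re = 0 := by
      intro m
      exact (ae_restrict_iff' measurableSet_Icc).mp
        (hzero (1+(m:ℝ)) (by linarith [Nat.cast_nonneg (α := ℝ) m]))
    filter_upwards [ae_all_iff.mpr h1] with k hk
    have hm : |k| ≤ 1 + (⌈|k|⌉₊ : ℝ) := by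
      have := Nat.le_ceil |k|
      linarith
    obtain ⟨h1', h2'⟩ := abs_le.mp hm
    exact hk ⌈|k|⌉₊ ⟨h1', h2'⟩
  filter_upwards [hzero', hHp] with k h1 h2
  exact Aux5.eq_zero_of_trace_re_eq_zero h2.1 h1
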